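/- If m is an odd positive integer, then either Φ_m(q) < Φ_{2m}(q) holds for all integers q ≥ 2, or Φ_{2m}(q) < Φ_m(q) holds for all integers q ≥ 2. -/

import Mathlib

open Polynomial Finset ArithmeticFunction Real
open scoped ArithmeticFunction.Moebius ArithmeticFunction.Omega

section Aux

lemma odd_of_dvd_odd {a b : ℕ} (h : a ∣ b) (hb : Odd b) : Odd a := by
  by_contra h'
  rw [Nat.not_odd_iff_even] at h'
  obtain ⟨c, rfl⟩ := h
  exact (Nat.not_even_iff_odd.mpr hb) (h'.mul_right c)

lemma aux_log_prod {Q : ℝ} (hQ : 2 ≤ Q) :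
    ∀ n > 0, ∑ i ∈ n.divisors, Real.log ((cyclotomic i ℝ).eval Q) = Real.log (Q ^ n - 1) := by
  intro n hn
  have h1 : (1:ℝ) < Q := by linarith
  rw [← Real.log_prod (fun i _ => (cyclotomic_pos' i h1).ne')]
  congr 1
  have := congrArg (Polynomial.eval Q) (prod_cyclotomic_eq_X_pow_sub_one hn ℝ)
  simpa [Polynomial.eval_prod] using this

lemma aux_logc (Q : ℝ) (hQ : 2 ≤ Q) (n : ℕ) (hn : 0 < n) :
    Real.log ((cyclotomic n ℝ).eval Q) =
      ∑ x ∈ n.divisorsAntidiagonal, μ x.fst • Real.log (Q ^ x.snd - 1) :=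
  (sum_eq_iff_sum_smul_moebius_eq.mp (aux_log_prod hQ) n hn).symm

lemma divisors_two_mul {n : ℕ} (hn : 0 < n) :
    (2 * n).divisors = n.divisors ∪ n.divisors.image (2 * ·) := by
  ext d
  simp only [Nat.mem_divisors, Finset.mem_union, Finset.mem_image]
  constructor
  · rintro ⟨hd, -⟩
    rcases Nat.even_or_odd d with he | ho
    · obtain ⟨e, rfl⟩ := he
      have h2 : 2 * e ∣ 2 * n := by simpa [two_mul] using hd
      exact Or.inr ⟨e, ⟨(Nat.mul_dvd_mul_iff_left (by norm_num : 0 < 2)).mp h2, hn.ne'⟩,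
        two_mul e⟩
    · exact Or.inl ⟨(Nat.Coprime.dvd_of_dvd_mul_left ho.coprime_two_right hd), hn.ne'⟩
  · rintro (⟨hd, -⟩ | ⟨e, ⟨he, -⟩, rfl⟩)
    · exact ⟨hd.mul_left 2, by positivity⟩
    · exact ⟨mul_dvd_mul_left 2 he, by positivity⟩

lemma aux_log_prod2 {Q : ℝ} (hQ : 2 ≤ Q) :
    ∀ n > 0, n ∈ {k : ℕ | Odd k} →
      ∑ i ∈ n.divisors, Real.log ((cyclotomic (2 * i) ℝ).eval Q) = Real.log (Q ^ n + 1) := by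
  intro n hn hodd
  simp only [Set.mem_setOf_eq] at hodd
  have h1 : (1:ℝ) < Q := by linarith
  have hQn : (1:ℝ) < Q ^ n := one_lt_pow₀ h1 hn.ne'
  have hdisj : Disjoint n.divisors (n.divisors.image (2 * ·)) := by
    rw [Finset.disjoint_left]
    rintro a ha hb
    obtain ⟨e, -, rfl⟩ := Finset.mem_image.mp hb
    have : Odd (2 * e) := odd_of_dvd_odd (Nat.dvd_of_mem_divisors ha) hodd
    simp [Nat.odd_iff] at this
  have hinj : Set.InjOn (2 * ·) n.divisors := fun a _ b _ h => by simpa using h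
  have h2n := aux_log_prod hQ (2 * n) (by positivity)
  rw [divisors_two_mul hn, Finset.sum_union hdisj, Finset.sum_image hinj] at h2n
  have hn1 := aux_log_prod hQ n hn
  have hfac : Q ^ (2 * n) - 1 = (Q ^ n - 1) * (Q ^ n + 1) := by
    rw [two_mul, pow_add]; ring
  rw [hfac, Real.log_mul (by linarith) (by positivity)] at h2n
  linarith

lemma aux_logc2 (Q : ℝ) (hQ : 2 ≤ Q) (n : ℕ) (hn : 0 < n) (hodd : Odd n) :
    Real.log ((cyclotomic (2 * n) ℝ).eval Q) =
      ∑ x ∈ n.divisorsAntidiagonal, μ x.fst • Real.log (Q ^ x.snd + 1) := by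
  refine ((sum_eq_iff_sum_smul_moebius_eq_on {k : ℕ | Odd k} ?_).mp (aux_log_prod2 hQ)
    n hn hodd).symm
  intro a b hab hb
  exact odd_of_dvd_odd hab hb

lemma squarefree_prod_primes {s : Finset ℕ} (hs : ∀ p ∈ s, p.Prime) :
    Squarefree (∏ p ∈ s, p) := by
  classical
  induction s using Finset.induction_on with
  | empty => simpa using squarefree_one
  | @insert p s hps ih =>
    rw [Finset.prod_insert hps]
    refine Nat.squarefree_mul_iff.mpr ⟨?_, (hs p (Finset.mem_insert_self p s)).squarefree,
      ih fun q hq => hs q (Finset.mem_insert_of_mem hq)⟩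
    exact Nat.Coprime.prod_right fun q hq =>
      (Nat.coprime_primes (hs p (Finset.mem_insert_self p s))
        (hs q (Finset.mem_insert_of_mem hq))).mpr (fun h => hps (h ▸ hq))

lemma squarefree_dvd_radical {a m : ℕ} (hm : m ≠ 0) (ha : a ∣ m) (hsq : Squarefree a) :
    a ∣ ∏ p ∈ m.primeFactors, p := by
  calc a = ∏ p ∈ a.primeFactors, p := (Nat.prod_primeFactors_of_squarefree hsq).symm
  _ ∣ ∏ p ∈ m.primeFactors, p :=
      Finset.prod_dvd_prod_of_subset _ _ _ (Nat.primeFactors_mono ha hm)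

lemma sum_reindex (m : ℕ) (hm : 0 < m) (h : ℕ → ℝ) :
    ∑ a ∈ m.divisors, (μ a : ℝ) * h (m / a) =
      (μ (∏ p ∈ m.primeFactors, p) : ℝ) *
        ∑ t ∈ (∏ p ∈ m.primeFactors, p).divisors,
          (μ t : ℝ) * h (m / (∏ p ∈ m.primeFactors, p) * t) := by
  set r := ∏ p ∈ m.primeFactors, p with hr
  have hr_dvd : r ∣ m := Nat.prod_primeFactors_dvd m
  have hr_sq : Squarefree r := squarefree_prod_primes fun p hp => Nat.prime_of_mem_primeFactors hp
  have hr_ne : r ≠ 0 := hr_sq.ne_zero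
  set k := m / r with hk
  have hkr : k * r = m := Nat.div_mul_cancel hr_dvd
  have h1 : ∑ a ∈ m.divisors, (μ a : ℝ) * h (m / a)
      = ∑ a ∈ r.divisors, (μ a : ℝ) * h (m / a) := by
    refine (Finset.sum_subset (Nat.divisors_subset_of_dvd hm.ne' hr_dvd) ?_).symm
    intro a ha hna
    have : μ a = 0 := by
      by_contra hμ
      exact hna (Nat.mem_divisors.mpr
        ⟨squarefree_dvd_radical hm.ne' (Nat.dvd_of_mem_divisors ha)
          (moebius_ne_zero_iff_squarefree.mp hμ), hr_ne⟩)
    simp [this]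
  have h2 : ∑ a ∈ r.divisors, (μ a : ℝ) * h (m / a)
      = ∑ t ∈ r.divisors, (μ (r / t) : ℝ) * h (m / (r / t)) :=
    (Nat.sum_div_divisors r (fun a => (μ a : ℝ) * h (m / a))).symm
  rw [h1, h2, Finset.mul_sum]
  refine Finset.sum_congr rfl fun t ht => ?_
  have htr : t ∣ r := Nat.dvd_of_mem_divisors ht
  have hrw : t * (r / t) = r := Nat.mul_div_cancel' htr
  have hco : Nat.Coprime t (r / t) := Nat.coprime_of_squarefree_mul (by rwa [hrw])
  have hsqt : Squarefree t := hr_sq.squarefree_of_dvd htr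
  have hμr : μ r = μ t * μ (r / t) := by
    have := isMultiplicative_moebius.map_mul_of_coprime hco
    rwa [hrw] at this
  have hμt2 : (μ t : ℤ) * μ t = 1 := by
    rw [moebius_apply_of_squarefree hsqt, ← pow_add]
    exact Even.neg_one_pow ⟨Ω t, rfl⟩
  have hμ : (μ (r / t) : ℝ) = (μ r : ℝ) * μ t := by
    have : (μ r : ℤ) * μ t = μ (r / t) := by
      rw [hμr]; rw [mul_comm (μ t) (μ (r/t)), mul_assoc, hμt2, mul_one]
    push_cast [← this]; ring
  have hdiv : m / (r / t) = k * t := by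
    have hpos : 0 < r / t := Nat.div_pos (Nat.le_of_dvd hr_sq.ne_zero.bot_lt htr)
      (Nat.pos_of_dvd_of_pos htr (Nat.pos_of_ne_zero hr_ne))
    refine Nat.div_eq_of_eq_mul_left hpos ?_
    rw [mul_assoc, hrw, hkr]
  rw [hμ, hdiv]; ring

lemma pow_big {Q : ℝ} (hQ : 2 ≤ Q) {b : ℕ} (hb : 1 ≤ b) : 2 ≤ Q ^ b :=
  le_trans hQ (le_self_pow₀ (by linarith) (by omega))

lemma log_ratio_nonneg {Q : ℝ} (hQ : 2 ≤ Q) {b : ℕ} (hb : 1 ≤ b) :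
    0 ≤ Real.log (Q ^ b + 1) - Real.log (Q ^ b - 1) := by
  have h2 := pow_big hQ hb
  have := Real.log_le_log (by linarith : (0:ℝ) < Q ^ b - 1) (by linarith : Q ^ b - 1 ≤ Q ^ b + 1)
  linarith

lemma log_ratio_le {Q : ℝ} (hQ : 2 ≤ Q) {b : ℕ} (hb : 1 ≤ b) :
    Real.log (Q ^ b + 1) - Real.log (Q ^ b - 1) ≤ 2 / (Q ^ b - 1) := by
  have h2 := pow_big hQ hb
  have hpos : (0:ℝ) < Q ^ b - 1 := by linarith
  have h := Real.log_le_sub_one_of_pos (show (0:ℝ) < (Q ^ b + 1) / (Q ^ b - 1) by positivity)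
  rw [Real.log_div (by positivity) hpos.ne'] at h
  have heq : (Q ^ b + 1) / (Q ^ b - 1) - 1 = 2 / (Q ^ b - 1) := by field_simp; ring
  linarith [heq ▸ h]

lemma log_ratio_ge {Q : ℝ} (hQ : 2 ≤ Q) {b : ℕ} (hb : 1 ≤ b) :
    2 / (Q ^ b + 1) ≤ Real.log (Q ^ b + 1) - Real.log (Q ^ b - 1) := by
  have h2 := pow_big hQ hb
  have hpos : (0:ℝ) < Q ^ b - 1 := by linarith
  have h := Real.log_le_sub_one_of_pos (show (0:ℝ) < (Q ^ b - 1) / (Q ^ b + 1) by positivity)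
  rw [Real.log_div hpos.ne' (by positivity)] at h
  have heq : (Q ^ b - 1) / (Q ^ b + 1) - 1 = -(2 / (Q ^ b + 1)) := by field_simp; ring
  linarith [heq ▸ h]

lemma geom_tail {x : ℝ} (hx : 0 ≤ x) (hx2 : x ≤ 1/2) (N : ℕ) (s : Finset ℕ)
    (hs : ∀ j ∈ s, N ≤ j) : ∑ j ∈ s, x ^ j ≤ 2 * x ^ N := by
  have hsub : s ⊆ Finset.Ico N (s.sup _root_.id + 1) := fun j hj =>
    Finset.mem_Ico.mpr ⟨hs j hj, Nat.lt_succ_of_le (Finset.le_sup (f := _root_.id) hj)⟩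
  calc ∑ j ∈ s, x ^ j ≤ ∑ j ∈ Finset.Ico N (s.sup _root_.id + 1), x ^ j :=
        Finset.sum_le_sum_of_subset_of_nonneg hsub (fun j _ _ => by positivity)
    _ = ∑ i ∈ Finset.range (s.sup _root_.id + 1 - N), x ^ (N + i) := by
        rw [Finset.sum_Ico_eq_sum_range]
    _ = x ^ N * ∑ i ∈ Finset.range (s.sup _root_.id + 1 - N), x ^ i := by
        rw [Finset.mul_sum]; exact Finset.sum_congr rfl fun i _ => by rw [pow_add]
    _ ≤ x ^ N * 2 := by
        refine mul_le_mul_of_nonneg_left ?_ (by positivity)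
        calc ∑ i ∈ Finset.range (s.sup _root_.id + 1 - N), x ^ i
            ≤ ∑ i ∈ Finset.range (s.sup _root_.id + 1 - N), (1/(2:ℝ)) ^ i :=
              Finset.sum_le_sum fun i _ => pow_le_pow_left₀ hx (by linarith) i
          _ ≤ 2 := sum_geometric_two_le _
    _ = 2 * x ^ N := by ring

lemma moebius_cast_ge {n : ℕ} : (-1 : ℝ) ≤ (μ n : ℝ) := by
  rcases eq_or_ne (μ n) 0 with h | h
  · simp [h]
  · have hsq := moebius_ne_zero_iff_squarefree.mp h
    rw [moebius_apply_of_squarefree hsq]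
    rcases Nat.even_or_odd (Ω n) with he | ho
    · rw [he.neg_one_pow]; norm_num
    · rw [ho.neg_one_pow]; norm_num

lemma T_pos {Q : ℝ} (hQ : 2 ≤ Q) {r k : ℕ} (hk : 0 < k) (hr : 0 < r) (hodd : Odd r) :
    0 < ∑ t ∈ r.divisors, (μ t : ℝ) *
      (Real.log (Q ^ (k * t) + 1) - Real.log (Q ^ (k * t) - 1)) := by
  have hQ1 : (1:ℝ) ≤ Q := by linarith
  have h1mem : (1:ℕ) ∈ r.divisors := Nat.one_mem_divisors.mpr hr.ne'
  rw [← Finset.add_sum_erase _ _ h1mem]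
  have ht3 : ∀ t ∈ r.divisors.erase 1, 3 ≤ t := by
    intro t ht
    have h1 : t ≠ 1 := (Finset.mem_erase.mp ht).1
    have h2 : t ∣ r := Nat.dvd_of_mem_divisors (Finset.mem_erase.mp ht).2
    have h3 : Odd t := odd_of_dvd_odd h2 hodd
    have h4 : 0 < t := Nat.pos_of_dvd_of_pos h2 hr
    rw [Nat.odd_iff] at h3; omega
  have hstep1 : ∀ t ∈ r.divisors.erase 1,
      Real.log (Q ^ (k * t) + 1) - Real.log (Q ^ (k * t) - 1) ≤ 16/7 * (1/Q) ^ (k * t) := by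
    intro t ht
    have h3t := ht3 t ht
    have hkt3 : 3 ≤ k * t := le_trans h3t (Nat.le_mul_of_pos_left t hk)
    have hkt1 : 1 ≤ k * t := by omega
    have hy8 : (8:ℝ) ≤ Q ^ (k * t) := by
      calc (8:ℝ) = 2 ^ 3 := by norm_num
        _ ≤ Q ^ 3 := pow_le_pow_left₀ (by norm_num) hQ 3
        _ ≤ Q ^ (k * t) := pow_le_pow_right₀ hQ1 hkt3
    refine le_trans (log_ratio_le hQ hkt1) ?_
    have hQpow : (1/Q) ^ (k*t) = 1 / Q ^ (k*t) := by rw [div_pow, one_pow]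
    rw [hQpow]
    have hrw2 : (16:ℝ)/7 * (1/Q^(k*t)) = 16/(7*Q^(k*t)) := by ring
    rw [hrw2, div_le_div_iff₀ (by linarith) (by positivity)]
    nlinarith [hy8]
  have htail : ∑ t ∈ r.divisors.erase 1,
      (Real.log (Q ^ (k * t) + 1) - Real.log (Q ^ (k * t) - 1)) ≤ 32/7 * (1/Q) ^ (3*k) := by
    calc ∑ t ∈ r.divisors.erase 1, (Real.log (Q ^ (k * t) + 1) - Real.log (Q ^ (k * t) - 1))
        ≤ ∑ t ∈ r.divisors.erase 1, 16/7 * (1/Q) ^ (k * t) := Finset.sum_le_sum hstep1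
      _ = 16/7 * ∑ t ∈ r.divisors.erase 1, (1/Q) ^ (k * t) := by rw [Finset.mul_sum]
      _ = 16/7 * ∑ j ∈ (r.divisors.erase 1).image (k * ·), (1/Q) ^ j := by
          rw [Finset.sum_image (fun a _ b _ h => by simpa [Nat.eq_iff_le_and_ge] using
            (Nat.eq_of_mul_eq_mul_left hk (by simpa using h)))]
      _ ≤ 16/7 * (2 * (1/Q) ^ (3*k)) := by
          refine mul_le_mul_of_nonneg_left ?_ (by norm_num)
          refine geom_tail (by positivity)
            (by rw [div_le_div_iff₀ (by linarith) (by norm_num)]; linarith) _ _ ?_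
          intro j hj
          obtain ⟨t, ht, rfl⟩ := Finset.mem_image.mp hj
          calc 3 * k = k * 3 := by ring
            _ ≤ k * t := Nat.mul_le_mul_left k (ht3 t ht)
      _ = 32/7 * (1/Q) ^ (3*k) := by ring
  have hrest : -(32/7 * (1/Q) ^ (3*k)) ≤ ∑ t ∈ r.divisors.erase 1, (μ t : ℝ) *
      (Real.log (Q ^ (k * t) + 1) - Real.log (Q ^ (k * t) - 1)) := by
    have hterm : ∀ t ∈ r.divisors.erase 1,
        -(Real.log (Q ^ (k * t) + 1) - Real.log (Q ^ (k * t) - 1)) ≤ (μ t : ℝ) *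
        (Real.log (Q ^ (k * t) + 1) - Real.log (Q ^ (k * t) - 1)) := by
      intro t ht
      have hnn := log_ratio_nonneg hQ (le_trans (by omega) (Nat.mul_le_mul_left k (ht3 t ht)) :
        1 ≤ k * t)
      nlinarith [moebius_cast_ge (n := t)]
    calc -(32/7 * (1/Q) ^ (3*k)) ≤ -∑ t ∈ r.divisors.erase 1,
          (Real.log (Q ^ (k * t) + 1) - Real.log (Q ^ (k * t) - 1)) := by linarith [htail]
      _ = ∑ t ∈ r.divisors.erase 1,
          -(Real.log (Q ^ (k * t) + 1) - Real.log (Q ^ (k * t) - 1)) := by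
          rw [Finset.sum_neg_distrib]
      _ ≤ _ := Finset.sum_le_sum hterm
  have hhead : 2 / (Q ^ k + 1) ≤ (μ 1 : ℝ) *
      (Real.log (Q ^ (k * 1) + 1) - Real.log (Q ^ (k * 1) - 1)) := by
    simp only [moebius_apply_one, mul_one, Int.cast_one, one_mul, Nat.mul_one]
    exact log_ratio_ge hQ (by omega)
  have hy : (2:ℝ) ≤ Q ^ k := pow_big hQ (by omega)
  have hnum : 32/7 * (1/Q) ^ (3*k) < 2 / (Q ^ k + 1) := by
    have h3k : (1/Q) ^ (3*k) = 1 / (Q ^ k) ^ 3 := by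
      rw [mul_comm 3 k, pow_mul, div_pow, one_pow, div_pow, one_pow]
    rw [h3k]
    have hrw3 : (32:ℝ)/7 * (1/(Q^k)^3) = 32/(7*(Q^k)^3) := by ring
    rw [hrw3, div_lt_div_iff₀ (by positivity) (by positivity)]
    nlinarith [hy, sq_nonneg (Q ^ k), sq_nonneg (Q ^ k - 2)]
  linarith

end Aux

/-- If `m` is an odd positive integer, then either `Φ_m(q) < Φ_{2m}(q)` for all
integers `q ≥ 2`, or `Φ_{2m}(q) < Φ_m(q)` for all integers `q ≥ 2`. -/
theorem cyclotomic_m_two_m_comparable (m : ℕ) (hm : 0 < m) (hodd : Odd m) :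
    (∀ q : ℤ, 2 ≤ q →
      (Polynomial.cyclotomic m ℤ).eval q < (Polynomial.cyclotomic (2 * m) ℤ).eval q) ∨
    (∀ q : ℤ, 2 ≤ q →
      (Polynomial.cyclotomic (2 * m) ℤ).eval q < (Polynomial.cyclotomic m ℤ).eval q) := by
  classical
  set r := ∏ p ∈ m.primeFactors, p with hrdef
  have hr_dvd : r ∣ m := Nat.prod_primeFactors_dvd m
  have hr_sq : Squarefree r := squarefree_prod_primes fun p hp => Nat.prime_of_mem_primeFactors hp
  have hr_pos : 0 < r := hr_sq.ne_zero.bot_lt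
  have hr_odd : Odd r := odd_of_dvd_odd hr_dvd hodd
  have hk_pos : 0 < m / r := Nat.div_pos (Nat.le_of_dvd hm hr_dvd) hr_pos
  -- the key computation, uniform in q
  have key : ∀ q : ℤ, 2 ≤ q →
      Real.log ((cyclotomic m ℝ).eval (q:ℝ)) - Real.log ((cyclotomic (2*m) ℝ).eval (q:ℝ))
        = -((μ r : ℝ) * ∑ t ∈ r.divisors, (μ t : ℝ) *
            (Real.log ((q:ℝ) ^ (m / r * t) + 1) - Real.log ((q:ℝ) ^ (m / r * t) - 1))) := by
    intro q hq
    have hQ : (2:ℝ) ≤ (q:ℝ) := by exact_mod_cast hq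
    rw [aux_logc (q:ℝ) hQ m hm, aux_logc2 (q:ℝ) hQ m hm hodd, ← Finset.sum_sub_distrib]
    have : ∑ x ∈ m.divisorsAntidiagonal,
        (μ x.1 • Real.log ((q:ℝ) ^ x.2 - 1) - μ x.1 • Real.log ((q:ℝ) ^ x.2 + 1))
        = -∑ x ∈ m.divisorsAntidiagonal, (μ x.1 : ℝ) *
            (Real.log ((q:ℝ) ^ x.2 + 1) - Real.log ((q:ℝ) ^ x.2 - 1)) := by
      rw [← Finset.sum_neg_distrib]
      refine Finset.sum_congr rfl fun x _ => ?_
      rw [zsmul_eq_mul, zsmul_eq_mul]; ring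
    rw [this]
    congr 1
    rw [Nat.sum_divisorsAntidiagonal (fun a b => (μ a : ℝ) *
      (Real.log ((q:ℝ) ^ b + 1) - Real.log ((q:ℝ) ^ b - 1)))]
    exact sum_reindex m hm (fun b => Real.log ((q:ℝ) ^ b + 1) - Real.log ((q:ℝ) ^ b - 1))
  -- translate the real inequality into the integer one
  have cast_eval : ∀ (n : ℕ) (q : ℤ),
      (((cyclotomic n ℤ).eval q : ℤ) : ℝ) = (cyclotomic n ℝ).eval (q:ℝ) := by
    intro n q
    rw [← map_cyclotomic_int n ℝ]
    exact (Polynomial.eval_intCast_map (Int.castRingHom ℝ) _ q).symm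
  have main : ∀ q : ℤ, 2 ≤ q → ((μ r = 1 →
        (cyclotomic m ℤ).eval q < (cyclotomic (2*m) ℤ).eval q) ∧ (μ r = -1 →
        (cyclotomic (2*m) ℤ).eval q < (cyclotomic m ℤ).eval q)) := by
    intro q hq
    have hQ : (2:ℝ) ≤ (q:ℝ) := by exact_mod_cast hq
    have hQ1 : (1:ℝ) < (q:ℝ) := by linarith
    have hT := T_pos hQ hk_pos hr_pos hr_odd
    have hkey := key q hq
    have hpos1 : 0 < (cyclotomic m ℝ).eval (q:ℝ) := cyclotomic_pos' m hQ1
    have hpos2 : 0 < (cyclotomic (2*m) ℝ).eval (q:ℝ) := cyclotomic_pos' (2*m) hQ1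
    constructor
    · intro hμ1
      rw [hμ1] at hkey
      have hlt : Real.log ((cyclotomic m ℝ).eval (q:ℝ))
          < Real.log ((cyclotomic (2*m) ℝ).eval (q:ℝ)) := by
        push_cast at hkey; linarith
      have := (Real.log_lt_log_iff hpos1 hpos2).mp hlt
      rw [← cast_eval m q, ← cast_eval (2*m) q] at this
      exact_mod_cast this
    · intro hμ1
      rw [hμ1] at hkey
      have hlt : Real.log ((cyclotomic (2*m) ℝ).eval (q:ℝ))
          < Real.log ((cyclotomic m ℝ).eval (q:ℝ)) := by
        push_cast at hkey; linarith
      have := (Real.log_lt_log_iff hpos2 hpos1).mp hlt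
      rw [← cast_eval m q, ← cast_eval (2*m) q] at this
      exact_mod_cast this
  have hμr : μ r = 1 ∨ μ r = -1 := by
    rw [moebius_apply_of_squarefree hr_sq]
    rcases Nat.even_or_odd (Ω r) with he | ho
    · exact Or.inl he.neg_one_pow
    · exact Or.inr ho.neg_one_pow
  rcases hμr with h | h
  · exact Or.inl fun q hq => (main q hq).1 h
  · exact Or.inr fun q hq => (main q hq).2 h
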